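/- The skew-symmetric bilinear map φ_2 on h_2 defined by φ_2(e_1,e_3) = e_1, φ_2(e_1,e_4) = −e_2, φ_2(e_2,e_3) = 2e_2, φ_2(e_3,e_4) = −e_4, φ_2(e_3,e_5) = −3e_5, and zero otherwise, is a 2-cocycle of h_2 with adjoint coefficients, and the deformed bracket [x,y]_t = [x,y] + t φ_2(x,y) satisfies the Jacobi identity for every scalar t. -/
import Mathlib


noncomputable section

/-- The underlying space of the 5-dimensional Heisenberg Lie algebra `h₂`. -/
abbrev V : Type := Fin 5 → ℝ

/-- Basis vectors: `e 0, …, e 4` are `e₁, …, e₅`. -/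
def e (i : Fin 5) : V := Pi.single i 1

/-- The Heisenberg bracket on `h₂`: `[e₁,e₃] = e₅`, `[e₂,e₄] = e₅`. -/
def br (x y : V) : V :=
  (x 0 * y 2 - x 2 * y 0 + x 1 * y 3 - x 3 * y 1) • e 4

/-- The deformed bracket `[x,y]_t = [x,y] + t • φ x y`. -/
def brt (t : ℝ) (φ : V → V → V) (x y : V) : V := br x y + t • φ x y

/-- The Chevalley–Eilenberg 2-cocycle condition (adjoint coefficients) for a
skew-symmetric 2-cochain `φ` on `h₂`. -/
def IsCocycle (φ : V → V → V) : Prop :=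
  ∀ x y z : V,
    φ (br x y) z - φ (br x z) y + φ (br y z) x
      - br x (φ y z) + br y (φ x z) - br z (φ x y) = 0

/-- `φ₂(e₁,e₃) = e₁`, `φ₂(e₁,e₄) = −e₂`, `φ₂(e₂,e₃) = 2e₂`, `φ₂(e₃,e₄) = −e₄`, `φ₂(e₃,e₅) = −3e₅`, zero otherwise. -/
def phi2 (x y : V) : V :=
  (x 0 * y 2 - x 2 * y 0) • e 0
  + (x 0 * y 3 - x 3 * y 0) • (-e 1)
  + (x 1 * y 2 - x 2 * y 1) • ((2:ℝ) • e 1)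
  + (x 2 * y 3 - x 3 * y 2) • (-e 3)
  + (x 2 * y 4 - x 4 * y 2) • ((-3:ℝ) • e 4)

lemma br_apply (x y : V) (j : Fin 5) :
    br x y j = if (j : ℕ) = 4 then x 0 * y 2 - x 2 * y 0 + x 1 * y 3 - x 3 * y 1 else 0 := by
  fin_cases j <;> simp [br, e, Pi.single_apply]

lemma phi2_apply (x y : V) (j : Fin 5) :
    phi2 x y j =
      if (j : ℕ) = 0 then x 0 * y 2 - x 2 * y 0
      else if (j : ℕ) = 1 then -(x 0 * y 3 - x 3 * y 0) + 2 * (x 1 * y 2 - x 2 * y 1)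
      else if (j : ℕ) = 3 then -(x 2 * y 3 - x 3 * y 2)
      else if (j : ℕ) = 4 then -3 * (x 2 * y 4 - x 4 * y 2)
      else 0 := by
  fin_cases j <;> simp [phi2, e, Pi.single_apply] <;> ring

lemma v0 : ((0 : Fin 5) : ℕ) = 0 := rfl
lemma v1 : ((1 : Fin 5) : ℕ) = 1 := rfl
lemma v2 : ((2 : Fin 5) : ℕ) = 2 := rfl
lemma v3 : ((3 : Fin 5) : ℕ) = 3 := rfl
lemma v4 : ((4 : Fin 5) : ℕ) = 4 := rfl

set_option maxHeartbeats 1600000 in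
/-- `φ₂` is a 2-cocycle, and `[x,y]_t = [x,y] + t φ₂(x,y)` satisfies the Jacobi
identity for every scalar `t`. -/
theorem phi2_cocycle_and_jacobi :
    IsCocycle phi2 ∧
      ∀ (t : ℝ) (x y z : V),
        brt t phi2 x (brt t phi2 y z) + brt t phi2 y (brt t phi2 z x)
          + brt t phi2 z (brt t phi2 x y) = 0 := by
  constructor
  · intro x y z
    funext j
    simp only [Pi.sub_apply, Pi.add_apply, Pi.zero_apply, phi2_apply, br_apply]
    fin_cases j <;> norm_num [v0, v1, v2, v3, v4] <;> ring
  · intro t x y z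
    funext j
    simp only [brt, Pi.add_apply, Pi.smul_apply, smul_eq_mul, Pi.zero_apply,
      phi2_apply, br_apply]
    fin_cases j <;> norm_num [v0, v1, v2, v3, v4] <;> ring

end
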